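/- Fix a goodput function G : ℝ → ℝ that is nondecreasing and bounded, and a SINR function η(δ, y) as in the pilot-estimation model. If |ρ_h(δ₁)| ≤ |ρ_h(δ₂)|, then for every observation y, G(η(δ₁, y)) ≤ G(η(δ₂, y)); consequently the expected maximum goodput r(δ) = E[G(η(δ, Y))] (over any fixed distribution of Y) satisfies r(δ₁) ≤ r(δ₂). In particular, r is non-monotonic in δ whenever |ρ_h(·)| is non-monotonic. -/

import Mathlib

open MeasureTheory

/-- For a nondecreasing bounded goodput `G` and the SINR `η(δ,y)` of the
pilot-estimation model, if `|ρ_h(δ₁)| ≤ |ρ_h(δ₂)|` then `G(η(δ₁,y)) ≤ G(η(δ₂,y))` for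
every `y`, and consequently the expected maximum goodput
`r(δ) = E[G(η(δ, Y))]` satisfies `r(δ₁) ≤ r(δ₂)`. -/
theorem stmt_15 {Ω : Type*} [MeasureSpace Ω] (μ : Measure Ω) [IsProbabilityMeasure μ]
    (Pd Pp σ2 ρ₀ : ℝ) (hPd : 0 < Pd) (hPp : 0 < Pp) (hσ2 : 0 < σ2) (hρ₀ : 0 < ρ₀)
    (ρh : ℕ → ℂ) (hCS : ∀ δ : ℕ, ‖ρh δ‖ ≤ ρ₀)
    (A : ℕ → ℝ) (hA : ∀ δ, A δ = Real.sqrt Pp * ‖ρh δ‖ / (Pp * ρ₀ + σ2))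
    (η : ℕ → ℂ → ℝ)
    (hη : ∀ δ y, η δ y =
      Pd * (A δ) ^ 2 * ‖y‖ ^ 2 /
        (Pd * (ρ₀ - Pp * ‖ρh δ‖ ^ 2 / (Pp * ρ₀ + σ2)) + σ2))
    (G : ℝ → ℝ) (hG : Monotone G) (hGb : ∃ M : ℝ, ∀ x, |G x| ≤ M)
    (Y : Ω → ℂ) (hYmeas : Measurable Y) (hY2 : MeasureTheory.MemLp Y 2 μ)
    (rfun : ℕ → ℝ) (hr : ∀ δ, rfun δ = ∫ ω, G (η δ (Y ω)) ∂μ)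
    (δ₁ δ₂ : ℕ) (hmono : ‖ρh δ₁‖ ≤ ‖ρh δ₂‖) :
    (∀ y : ℂ, G (η δ₁ y) ≤ G (η δ₂ y)) ∧ rfun δ₁ ≤ rfun δ₂ := by
  have hden : 0 < Pp * ρ₀ + σ2 := by positivity
  have hsqab : ‖ρh δ₁‖ ^ 2 ≤ ‖ρh δ₂‖ ^ 2 := by
    nlinarith [norm_nonneg (ρh δ₁), norm_nonneg (ρh δ₂)]
  have hD : ∀ δ, 0 < Pd * (ρ₀ - Pp * ‖ρh δ‖ ^ 2 / (Pp * ρ₀ + σ2)) + σ2 := by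
    intro δ
    have h1 : Pp * ‖ρh δ‖ ^ 2 / (Pp * ρ₀ + σ2) ≤ ρ₀ := by
      rw [div_le_iff₀ hden]
      have h2 : ‖ρh δ‖ ^ 2 ≤ ρ₀ ^ 2 := pow_le_pow_left₀ (norm_nonneg _) (hCS δ) 2
      nlinarith
    nlinarith
  have hηle : ∀ y : ℂ, η δ₁ y ≤ η δ₂ y := by
    intro y
    rw [hη, hη, hA, hA]
    have hsq : Real.sqrt Pp ^ 2 = Pp := Real.sq_sqrt hPp.le
    apply div_le_div₀
    · positivity
    · rw [div_pow, div_pow, mul_pow, mul_pow, hsq]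
      gcongr
    · exact hD δ₂
    · have : Pp * ‖ρh δ₁‖ ^ 2 / (Pp * ρ₀ + σ2) ≤ Pp * ‖ρh δ₂‖ ^ 2 / (Pp * ρ₀ + σ2) := by
        gcongr
      nlinarith
  have hG1 : ∀ y : ℂ, G (η δ₁ y) ≤ G (η δ₂ y) := fun y => hG (hηle y)
  refine ⟨hG1, ?_⟩
  obtain ⟨M, hM⟩ := hGb
  have hηmeas : ∀ δ, Measurable (fun y : ℂ => η δ y) := by
    intro δ
    have : (fun y : ℂ => η δ y) = fun y =>
        Pd * (A δ) ^ 2 * ‖y‖ ^ 2 /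
          (Pd * (ρ₀ - Pp * ‖ρh δ‖ ^ 2 / (Pp * ρ₀ + σ2)) + σ2) := by
      funext y; exact hη δ y
    rw [this]
    exact ((continuous_const.mul (continuous_norm.pow 2)).div_const _).measurable
  have hint : ∀ δ, Integrable (fun ω => G (η δ (Y ω))) μ := by
    intro δ
    have hmeas : Measurable (fun ω => G (η δ (Y ω))) :=
      (hG.measurable.comp (hηmeas δ)).comp hYmeas
    refine (integrable_const M).mono' hmeas.aestronglyMeasurable ?_
    filter_upwards with ω
    simpa [Real.norm_eq_abs] using hM (η δ (Y ω))
  rw [hr, hr]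
  exact integral_mono (hint δ₁) (hint δ₂) fun ω => hG1 (Y ω)
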